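/- In the directed cycle Z_m (m ≥ 3), the magnitude-homology differential d¹ sends the class λ_e^i = [(x,x⁺,...,x,x⁺)] ∈ MH_{2i+1, mi+1}(Z_m) (a tuple with 2i+2 entries, e the edge x→x⁺=y) to κ_y^i − κ_x^i, where κ_x^i = [(x,x⁺,...,x,x⁺,x)] ∈ MH_{2i, mi}(Z_m); equivalently, applying the reachability differential to the representative (x,x⁺,...,x,x⁺) and discarding terms of length < mi yields (x⁺,x,...,x,x⁺) − (x,x⁺,...,x⁺,x), which represents κ_y^i − κ_x^i. -/

import Mathlib

open scoped Classical

/-- A directed graph on a vertex type `V` (loops allowed, no parallel edges). -/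
structure DGraph (V : Type) where
  Adj : V → V → Prop

namespace DGraph
variable {V : Type}

/-- There is a directed path of length `n` (i.e. with `n` edges) from `x` to `y`. -/
def PathLen (G : DGraph V) (x y : V) (n : ℕ) : Prop :=
  ∃ f : ℕ → V, f 0 = x ∧ f n = y ∧ ∀ i < n, G.Adj (f i) (f (i + 1))

/-- The shortest path metric, with values in `ℕ∞ = ℕ ∪ {∞}`. -/
noncomputable def edist (G : DGraph V) (x y : V) : ℕ∞ :=
  sInf {n : ℕ∞ | ∃ m : ℕ, n = m ∧ G.PathLen x y m}

/-- The length of a tuple of vertices: the sum of consecutive distances. -/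
noncomputable def tlen (G : DGraph V) {k : ℕ} (f : Fin (k + 1) → V) : ℕ∞ :=
  ∑ i : Fin k, G.edist (f i.castSucc) (f i.succ)

/-- `y` is reachable from `x` by a directed path. -/
def Reaches (G : DGraph V) (x y : V) : Prop := Relation.ReflTransGen G.Adj x y

/-- The induced subgraph on a set of vertices. -/
def induce (G : DGraph V) (A : Set V) : DGraph A := ⟨fun a b => G.Adj a.1 b.1⟩

end DGraph

variable {V : Type}

/-- Validity of a tuple as a magnitude-chain basis element of degree `k` and length `ℓ`:
consecutive entries are distinct, at finite distance, and the total length is `ℓ`. -/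
def MCValid (G : DGraph V) (k ℓ : ℕ) (f : Fin (k + 1) → V) : Prop :=
  (∀ i : Fin k, G.edist (f i.castSucc) (f i.succ) ≠ 0 ∧ G.edist (f i.castSucc) (f i.succ) ≠ ⊤) ∧
    G.tlen f = (ℓ : ℕ∞)

/-- Basis of the magnitude chain group `MC_{k,ℓ}(G)`. -/
def MCb (G : DGraph V) (k ℓ : ℕ) : Type := {f : Fin (k + 1) → V // MCValid G k ℓ f}

/-- The magnitude chain group `MC_{k,ℓ}(G)` with coefficients in `R`. -/
abbrev MCMod (R : Type) [CommRing R] (G : DGraph V) (k ℓ : ℕ) := MCb G k ℓ →₀ R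

/-- Deletion of the interior entry in position `j+1` of a `(k+2)`-tuple. -/
def delMid {k : ℕ} (f : Fin (k + 2) → V) (j : Fin k) : Fin (k + 1) → V :=
  f ∘ (Fin.succAbove j.succ.castSucc)

/-- The magnitude-chain differential `MC_{k+1,ℓ}(G) → MC_{k,ℓ}(G)`: delete interior
entries with alternating signs, omitting any length-decreasing term. -/
noncomputable def dMC (R : Type) [CommRing R] (G : DGraph V) (k ℓ : ℕ) :
    MCMod R G (k + 1) ℓ →ₗ[R] MCMod R G k ℓ :=
  Finsupp.lsum R fun b => LinearMap.toSpanSingleton R _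
    (∑ j : Fin k, (-1 : R) ^ ((j : ℕ) + 1) •
      (if h : MCValid G k ℓ (delMid b.1 j) then
        Finsupp.single (⟨delMid b.1 j, h⟩ : MCb G k ℓ) (1 : R) else 0))

/-- The outgoing magnitude differential from degree `k` (zero in degree `0`). -/
noncomputable def dMCOut (R : Type) [CommRing R] (G : DGraph V) (ℓ : ℕ) :
    (k : ℕ) → MCMod R G k ℓ →ₗ[R] MCMod R G (k - 1) ℓ
  | 0 => 0
  | (k + 1) => dMC R G k ℓ

/-- Magnitude homology `MH_{k,ℓ}(G)` with coefficients in `R`. -/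
noncomputable abbrev MH (R : Type) [CommRing R] (G : DGraph V) (k ℓ : ℕ) :=
  letI : HasQuotient (LinearMap.ker (dMCOut R G ℓ k))
      (Submodule R (LinearMap.ker (dMCOut R G ℓ k))) := Submodule.hasQuotient (R := R) (M := (LinearMap.ker (dMCOut R G ℓ k)))
  LinearMap.ker (dMCOut R G ℓ k) ⧸
    (LinearMap.range (dMCOut R G ℓ (k + 1))).comap (LinearMap.ker (dMCOut R G ℓ k)).subtype

/-- Embedding of the magnitude chains into the free module on all tuples of vertices. -/
noncomputable def eMC (R : Type) [CommRing R] (G : DGraph V) (k ℓ : ℕ) :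
    MCMod R G k ℓ →ₗ[R] ((Fin (k + 1) → V) →₀ R) :=
  Finsupp.lmapDomain R R Subtype.val

/-- Basis of a subcomplex of the magnitude chains, cut out by a predicate `P` on tuples
(assumed closed under the interior deletions appearing in the differential). -/
def RCb (G : DGraph V) (P : ∀ k, (Fin (k + 1) → V) → Prop) (k ℓ : ℕ) : Type :=
  {f : Fin (k + 1) → V // MCValid G k ℓ f ∧ P k f}

/-- The degree-`k`, length-`ℓ` chain group of the subcomplex cut out by `P`. -/
abbrev RMod (R : Type) [CommRing R] (G : DGraph V) (P : ∀ k, (Fin (k + 1) → V) → Prop)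
    (k ℓ : ℕ) := RCb G P k ℓ →₀ R

/-- The differential of the subcomplex cut out by `P`. -/
noncomputable def dR (R : Type) [CommRing R] (G : DGraph V)
    (P : ∀ k, (Fin (k + 1) → V) → Prop) (k ℓ : ℕ) :
    RMod R G P (k + 1) ℓ →ₗ[R] RMod R G P k ℓ :=
  Finsupp.lsum R fun b => LinearMap.toSpanSingleton R _
    (∑ j : Fin k, (-1 : R) ^ ((j : ℕ) + 1) •
      (if h : MCValid G k ℓ (delMid b.1 j) ∧ P k (delMid b.1 j) then
        Finsupp.single (⟨delMid b.1 j, h⟩ : RCb G P k ℓ) (1 : R) else 0))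

/-- The outgoing differential of the subcomplex from degree `k` (zero in degree `0`). -/
noncomputable def dROut (R : Type) [CommRing R] (G : DGraph V)
    (P : ∀ k, (Fin (k + 1) → V) → Prop) (ℓ : ℕ) :
    (k : ℕ) → RMod R G P k ℓ →ₗ[R] RMod R G P (k - 1) ℓ
  | 0 => 0
  | (k + 1) => dR R G P k ℓ

/-- The degree-`k`, length-`ℓ` homology of the subcomplex cut out by `P`. -/
noncomputable abbrev RH (R : Type) [CommRing R] (G : DGraph V)
    (P : ∀ k, (Fin (k + 1) → V) → Prop) (k ℓ : ℕ) :=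
  letI : HasQuotient (LinearMap.ker (dROut R G P ℓ k))
      (Submodule R (LinearMap.ker (dROut R G P ℓ k))) := Submodule.hasQuotient (R := R) (M := (LinearMap.ker (dROut R G P ℓ k)))
  LinearMap.ker (dROut R G P ℓ k) ⧸
    (LinearMap.range (dROut R G P ℓ (k + 1))).comap (LinearMap.ker (dROut R G P ℓ k)).subtype

/-- Embedding of the subcomplex chains into the free module on all tuples of vertices. -/
noncomputable def eR (R : Type) [CommRing R] (G : DGraph V)
    (P : ∀ k, (Fin (k + 1) → V) → Prop) (k ℓ : ℕ) :
    RMod R G P k ℓ →ₗ[R] ((Fin (k + 1) → V) →₀ R) :=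
  Finsupp.lmapDomain R R Subtype.val

/-- `A ⊆ V`, with projection `π`, is a cofibration in `G`: an induced subgraph inclusion
with no edges from outside `A` into `A`, such that every vertex `x` in the reach of `A`
has a projection `π x ∈ A` with `d(a,x) = d(a,π x) + d(π x,x)` for all `a ∈ A`. -/
def IsCofib (G : DGraph V) (A : Set V) (π : V → V) : Prop :=
  (∀ u v : V, u ∉ A → v ∈ A → ¬ G.Adj u v) ∧
  (∀ x : V, (∃ a ∈ A, G.Reaches a x) →
    π x ∈ A ∧ ∀ a ∈ A, G.edist a x = G.edist a (π x) + G.edist (π x) x)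

/-- The predicate cutting out the subcomplex `A_{*,ℓ}(a,x)` of `MC_{*,ℓ}(X)`: tuples
starting at `a`, ending at `x`, with all intermediate entries in `A`. -/
def AP (A : Set V) (a x : V) : ∀ k, (Fin (k + 1) → V) → Prop :=
  fun k f => f 0 = a ∧ f (Fin.last k) = x ∧
    ∀ i : Fin (k + 1), i ≠ 0 → i ≠ Fin.last k → f i ∈ A

/-- The directed cycle `Z_m` on the vertex set `ZMod m`, with edges `x → x + 1`. -/
def Zc (m : ℕ) : DGraph (ZMod m) := ⟨fun x y => y = x + 1⟩

/-- The part of the reachability differential that lowers the length by exactly one: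
delete any entry (endpoints included) with alternating signs `(-1)^j`, keeping only
terms of length exactly `ℓ` (tuples with repeated consecutive entries are invalid and
hence discarded).  On magnitude homology this induces the differential `d¹` of the
magnitude-path spectral sequence. -/
noncomputable def dMC1 (R : Type) [CommRing R] {V : Type} (G : DGraph V) (k ℓ : ℕ) :
    MCMod R G (k + 1) (ℓ + 1) →ₗ[R] MCMod R G k ℓ :=
  Finsupp.lsum R fun b => LinearMap.toSpanSingleton R _
    (∑ j : Fin (k + 2), (-1 : R) ^ (j : ℕ) •
      (if h : MCValid G k ℓ (b.1 ∘ j.succAbove) then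
        Finsupp.single (⟨b.1 ∘ j.succAbove, h⟩ : MCb G k ℓ) (1 : R) else 0))


section Aux

lemma Zc_pathLen (m : ℕ) (x y : ZMod m) (n : ℕ) : (Zc m).PathLen x y n ↔ y = x + n := by
  constructor
  · rintro ⟨f, h0, hn, hstep⟩
    have key : ∀ j, j ≤ n → f j = x + j := by
      intro j
      induction j with
      | zero => intro _; simp [h0]
      | succ j ih =>
        intro hj
        have := hstep j (by omega)
        rw [show (Zc m).Adj (f j) (f (j+1)) ↔ f (j+1) = f j + 1 from Iff.rfl] at this
        rw [this, ih (by omega)]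
        push_cast
        ring
    rw [← hn, key n le_rfl]
  · rintro rfl
    exact ⟨fun j => x + j, by simp, rfl, fun j hj => by show _ = _; push_cast; ring⟩

lemma Zc_edist_self (m : ℕ) (x : ZMod m) : (Zc m).edist x x = 0 :=
  le_antisymm (sInf_le ⟨0, by simp, (Zc_pathLen m x x 0).2 (by simp)⟩) zero_le

lemma Zc_edist_succ (m : ℕ) (hm : 3 ≤ m) (x : ZMod m) : (Zc m).edist x (x + 1) = 1 := by
  haveI : Fact (1 < m) := ⟨by omega⟩
  refine le_antisymm (sInf_le ⟨1, by simp, (Zc_pathLen m x (x+1) 1).2 (by push_cast; ring)⟩) ?_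
  refine le_sInf ?_
  rintro n ⟨k, rfl, hp⟩
  rw [Zc_pathLen] at hp
  have hk : k ≠ 0 := by
    rintro rfl
    simp at hp
  exact_mod_cast Nat.one_le_cast.2 (Nat.one_le_iff_ne_zero.2 hk)

lemma Zc_edist_pred (m : ℕ) (hm : 3 ≤ m) (x : ZMod m) :
    (Zc m).edist (x + 1) x = ((m - 1 : ℕ) : ℕ∞) := by
  haveI : NeZero m := ⟨by omega⟩
  refine le_antisymm (sInf_le ⟨m - 1, rfl, (Zc_pathLen m (x+1) x (m-1)).2 ?_⟩) ?_
  · have : ((m - 1 : ℕ) : ZMod m) = (m : ZMod m) - 1 := by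
      push_cast [Nat.cast_sub (by omega : 1 ≤ m)]
      ring
    rw [this, ZMod.natCast_self]
    ring
  · refine le_sInf ?_
    rintro n ⟨k, rfl, hp⟩
    rw [Zc_pathLen] at hp
    have : ((k + 1 : ℕ) : ZMod m) = 0 := by
      push_cast
      linear_combination -hp
    rw [ZMod.natCast_eq_zero_iff] at this
    have := Nat.le_of_dvd (by omega) this
    exact_mod_cast Nat.cast_le.2 (Nat.sub_le_iff_le_add.2 this)

lemma tlen_alt (m : ℕ) (u v : ZMod m) (k : ℕ) :
    (Zc m).tlen (fun t : Fin (k + 1) => if Even (t : ℕ) then u else v)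
      = ∑ t ∈ Finset.range k, (if Even t then (Zc m).edist u v else (Zc m).edist v u) := by
  rw [DGraph.tlen, ← Fin.sum_univ_eq_sum_range]
  refine Finset.sum_congr rfl fun t _ => ?_
  by_cases h : Even (t : ℕ) <;>
    simp [h, Nat.even_add_one, Fin.coe_castSucc, Fin.val_succ]

lemma sum_even_odd (a b i : ℕ) :
    ∑ t ∈ Finset.range (2 * i), (if Even t then a else b) = i * (a + b) := by
  induction i with
  | zero => simp
  | succ i ih =>
    rw [show 2 * (i + 1) = 2 * i + 1 + 1 by ring, Finset.sum_range_succ, Finset.sum_range_succ, ih]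
    have h1 : Even (2 * i) := even_two_mul i
    have h2 : ¬ Even (2 * i + 1) := by simp [Nat.even_add_one, h1]
    rw [if_pos h1, if_neg h2]
    ring

lemma ite_cast_edist (m : ℕ) (hm : 3 ≤ m) (x : ZMod m) (t : ℕ) :
    (if Even t then (Zc m).edist x (x+1) else (Zc m).edist (x+1) x)
      = ((if Even t then 1 else m - 1 : ℕ) : ℕ∞) := by
  rw [Zc_edist_succ m hm x, Zc_edist_pred m hm x]
  split <;> simp

lemma ite_cast_edist' (m : ℕ) (hm : 3 ≤ m) (x : ZMod m) (t : ℕ) :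
    (if Even t then (Zc m).edist (x+1) x else (Zc m).edist x (x+1))
      = ((if Even t then m - 1 else 1 : ℕ) : ℕ∞) := by
  rw [Zc_edist_succ m hm x, Zc_edist_pred m hm x]
  split <;> simp

lemma edist_pair_prop (m : ℕ) (hm : 3 ≤ m) (x : ZMod m) :
    ((Zc m).edist x (x+1) ≠ 0 ∧ (Zc m).edist x (x+1) ≠ ⊤) ∧
      ((Zc m).edist (x+1) x ≠ 0 ∧ (Zc m).edist (x+1) x ≠ ⊤) := by
  rw [Zc_edist_succ m hm x, Zc_edist_pred m hm x]
  have h1 : (m - 1 : ℕ) ≠ 0 := by omega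
  exact ⟨⟨one_ne_zero, by simp⟩, by exact_mod_cast Nat.cast_ne_zero.2 h1, WithTop.coe_ne_top⟩

lemma mcvalid_b (m : ℕ) (hm : 3 ≤ m) (i : ℕ) (x : ZMod m) :
    MCValid (Zc m) (2 * i + 1) (m * i + 1)
      (fun t : Fin (2 * i + 2) => if Even (t : ℕ) then x else x + 1) := by
  constructor
  · intro t
    by_cases h : Even (t : ℕ)
    · simpa [h, Nat.even_add_one] using (edist_pair_prop m hm x).1
    · simpa [h, Nat.even_add_one] using (edist_pair_prop m hm x).2
  · rw [tlen_alt]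
    simp_rw [ite_cast_edist m hm x]
    rw [Finset.sum_range_succ, ← Nat.cast_sum, sum_even_odd, if_pos (even_two_mul i),
      show 1 + (m - 1) = m by omega]
    push_cast
    ring

lemma mcvalid_b1 (m : ℕ) (hm : 3 ≤ m) (i : ℕ) (x : ZMod m) :
    MCValid (Zc m) (2 * i) (m * i)
      (fun t : Fin (2 * i + 1) => if Even (t : ℕ) then x + 1 else x) := by
  constructor
  · intro t
    by_cases h : Even (t : ℕ)
    · simpa [h, Nat.even_add_one] using (edist_pair_prop m hm x).2
    · simpa [h, Nat.even_add_one] using (edist_pair_prop m hm x).1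
  · rw [tlen_alt]
    simp_rw [ite_cast_edist' m hm x]
    rw [← Nat.cast_sum, sum_even_odd, show (m - 1) + 1 = m by omega]
    push_cast
    ring

lemma mcvalid_b2 (m : ℕ) (hm : 3 ≤ m) (i : ℕ) (x : ZMod m) :
    MCValid (Zc m) (2 * i) (m * i)
      (fun t : Fin (2 * i + 1) => if Even (t : ℕ) then x else x + 1) := by
  constructor
  · intro t
    by_cases h : Even (t : ℕ)
    · simpa [h, Nat.even_add_one] using (edist_pair_prop m hm x).1
    · simpa [h, Nat.even_add_one] using (edist_pair_prop m hm x).2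
  · rw [tlen_alt]
    simp_rw [ite_cast_edist m hm x]
    rw [← Nat.cast_sum, sum_even_odd, show 1 + (m - 1) = m by omega]
    push_cast
    ring

lemma coe_succAbove {n : ℕ} (j : Fin (n + 1)) (t : Fin n) :
    ((j.succAbove t : Fin (n + 1)) : ℕ)
      = if (t : ℕ) < (j : ℕ) then (t : ℕ) else (t : ℕ) + 1 := by
  rcases lt_or_ge t.castSucc j with h | h
  · rw [Fin.succAbove_of_castSucc_lt _ _ h, if_pos]
    · exact Fin.coe_castSucc t
    · simpa [Fin.lt_def] using h
  · rw [Fin.succAbove_of_le_castSucc _ _ h, if_neg]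
    · exact Fin.val_succ t
    · simpa [Fin.le_def] using h

end Aux

/-- in `Z_m` (`m ≥ 3`), applying the reachability differential to the
representative `(x,x⁺,...,x,x⁺)` of `λ_e^i ∈ MH_{2i+1,mi+1}(Z_m)` (with `2i+2`
entries, `x⁺ = x+1`) and discarding the terms of length `< mi` yields
`(x⁺,x,...,x,x⁺) − (x,x⁺,...,x⁺,x)`, which represents `κ_y^i − κ_x^i` (where
`y = x⁺`); i.e. `d¹(λ_e^i) = κ_y^i − κ_x^i`. -/
theorem d1_lambda (R : Type) [CommRing R] (m : ℕ) (hm : 3 ≤ m) (i : ℕ) (x : ZMod m) :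
    ∃ (b : MCb (Zc m) (2 * i + 1) (m * i + 1)) (b₁ b₂ : MCb (Zc m) (2 * i) (m * i)),
      -- `b` is the representative `(x, x⁺, ..., x, x⁺)` of `λ_e^i`:
      b.1 = (fun t : Fin (2 * i + 2) => if Even (t : ℕ) then x else x + 1) ∧
      -- `b₁ = (y, y⁻, ..., y⁻, y)` represents `κ_y^i` and
      -- `b₂ = (x, x⁺, ..., x⁺, x)` represents `κ_x^i`:
      b₁.1 = (fun t : Fin (2 * i + 1) => if Even (t : ℕ) then x + 1 else x) ∧
      b₂.1 = (fun t : Fin (2 * i + 1) => if Even (t : ℕ) then x else x + 1) ∧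
      dMC1 R (Zc m) (2 * i) (m * i) (Finsupp.single b 1) =
        Finsupp.single b₁ 1 - Finsupp.single b₂ 1 := by
  classical
  set G := Zc m with hG
  set fb : Fin (2 * i + 2) → ZMod m :=
    (fun t : Fin (2 * i + 2) => if Even (t : ℕ) then x else x + 1) with hfb
  set f1 : Fin (2 * i + 1) → ZMod m :=
    (fun t : Fin (2 * i + 1) => if Even (t : ℕ) then x + 1 else x) with hf1
  set f2 : Fin (2 * i + 1) → ZMod m :=
    (fun t : Fin (2 * i + 1) => if Even (t : ℕ) then x else x + 1) with hf2
  have hb : MCValid G (2 * i + 1) (m * i + 1) fb := mcvalid_b m hm i x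
  have hb1 : MCValid G (2 * i) (m * i) f1 := mcvalid_b1 m hm i x
  have hb2 : MCValid G (2 * i) (m * i) f2 := mcvalid_b2 m hm i x
  refine ⟨⟨fb, hb⟩, ⟨f1, hb1⟩, ⟨f2, hb2⟩, rfl, rfl, rfl, ?_⟩
  rw [dMC1]
  erw [Finsupp.lsum_single]
  rw [LinearMap.toSpanSingleton_apply, one_smul]
  show (∑ j : Fin (2 * i + 2), ((-1 : R) ^ (j : ℕ) • (if h : MCValid G (2 * i) (m * i) (fb ∘ j.succAbove) then Finsupp.single (⟨fb ∘ j.succAbove, h⟩ : MCb G (2 * i) (m * i)) (1 : R) else 0) : MCMod R G (2 * i) (m * i))) = _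
  -- identify the two surviving faces
  have h0 : fb ∘ (0 : Fin (2 * i + 2)).succAbove = f1 := by
    funext t
    simp only [Function.comp_apply, Fin.succAbove_zero, hfb, hf1, Fin.val_succ]
    by_cases h : Even (t : ℕ) <;> simp [h, Nat.even_add_one]
  have hlast : fb ∘ (Fin.last (2 * i + 1)).succAbove = f2 := by
    funext t
    simp only [Function.comp_apply, Fin.succAbove_last, hfb, hf2, Fin.coe_castSucc]
  -- interior faces vanish
  have hmid : ∀ j : Fin (2 * i + 2), j ≠ 0 → j ≠ Fin.last (2 * i + 1) →
      ¬ MCValid G (2 * i) (m * i) (fb ∘ j.succAbove) := by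
    intro j hj0 hjl hval
    have hj0' : (j : ℕ) ≠ 0 := by have := Fin.val_ne_iff.2 hj0; rwa [Fin.val_zero] at this
    have hjl' : (j : ℕ) ≠ 2 * i + 1 := by have := Fin.val_ne_iff.2 hjl; rwa [Fin.val_last] at this
    have hjlt := j.isLt
    set p : ℕ := (j : ℕ) - 1 with hp
    have hplt : p < 2 * i := by omega
    obtain ⟨q, hqv⟩ : ∃ q : Fin (2 * i), (q : ℕ) = p := ⟨⟨p, hplt⟩, rfl⟩
    have e1 : ((j.succAbove q.castSucc : Fin (2 * i + 2)) : ℕ) = p := by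
      rw [coe_succAbove, Fin.coe_castSucc, hqv, if_pos (by omega)]
    have e2 : ((j.succAbove q.succ : Fin (2 * i + 2)) : ℕ) = p + 2 := by
      rw [coe_succAbove, Fin.val_succ, hqv, if_neg (by omega)]
    have heq : (fb ∘ j.succAbove) q.castSucc = (fb ∘ j.succAbove) q.succ := by
      simp only [Function.comp_apply, hfb, e1, e2]
      have : Even (p + 2) ↔ Even p := by simp [Nat.even_add]
      by_cases h : Even p <;> simp [h, this]
    have := (hval.1 q).1
    rw [heq, Zc_edist_self] at this
    exact this rfl
  -- reduce the sum to the two endpoint terms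
  have hne : (0 : Fin (2 * i + 2)) ≠ Fin.last (2 * i + 1) := by
    intro h
    have := congrArg Fin.val h
    simp at this
  rw [← Finset.sum_subset
      (Finset.subset_univ ({0, Fin.last (2 * i + 1)} : Finset (Fin (2 * i + 2))))
      (fun j _ hj => by
        have hj0 : j ≠ 0 := fun h => hj (by simp [h])
        have hjl : j ≠ Fin.last (2 * i + 1) := fun h => hj (by simp [h])
        rw [dif_neg (hmid j hj0 hjl), smul_zero]),
    Finset.sum_pair hne]
  have t0 : ((-1 : R) ^ ((0 : Fin (2 * i + 2)) : ℕ)) •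
      (if h : MCValid G (2 * i) (m * i) (fb ∘ (0 : Fin (2 * i + 2)).succAbove) then
        Finsupp.single (⟨fb ∘ (0 : Fin (2 * i + 2)).succAbove, h⟩ : MCb G (2 * i) (m * i)) (1 : R)
      else 0)
      = Finsupp.single (⟨f1, hb1⟩ : MCb G (2 * i) (m * i)) (1 : R) := by
    simp only [h0, Fin.val_zero, pow_zero, one_smul]
    rw [dif_pos hb1]
  have tl : ((-1 : R) ^ ((Fin.last (2 * i + 1) : Fin (2 * i + 2)) : ℕ)) •
      (if h : MCValid G (2 * i) (m * i) (fb ∘ (Fin.last (2 * i + 1)).succAbove) then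
        Finsupp.single
          (⟨fb ∘ (Fin.last (2 * i + 1)).succAbove, h⟩ : MCb G (2 * i) (m * i)) (1 : R)
      else 0)
      = - Finsupp.single (⟨f2, hb2⟩ : MCb G (2 * i) (m * i)) (1 : R) := by
    simp only [hlast, Fin.val_last]
    rw [dif_pos hb2, Odd.neg_one_pow ⟨i, by ring⟩, neg_smul, one_smul]
  rw [t0, tl]
  abel
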